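/- Let N, d, T ≥ 1 be integers. Let Ψ ∈ ℝ^{N×N} be a symmetric doubly stochastic matrix all of whose eigenvalues lie in [0,1], and let λ_2 denote the largest eigenvalue of Ψ restricted to the subspace {v ∈ ℝ^N : Σ_i v_i = 0}; assume λ_2 < 1. Let (1/N)_N ∈ ℝ^{N×N} be the matrix with all entries 1/N. Then for any matrices M_0, …, M_{T−1} ∈ ℝ^{d×N}: Σ_{t=0}^{T−1} ‖ Σ_{s=0}^{t} M_s (I − (1/N)_N) Ψ^{t−s} ‖_F² ≤ (1/(1 − λ_2)²) · Σ_{t=0}^{T−1} ‖M_t‖_F². -/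

import Mathlib

open Finset Matrix

/-- Squared Frobenius norm of a real matrix. -/
def frobSq {d N : ℕ} (M : Matrix (Fin d) (Fin N) ℝ) : ℝ :=
  ∑ r, ∑ c, (M r c) ^ 2

lemma euc_dot_self_eq_sum_sq {N : ℕ} (B : OrthonormalBasis (Fin N) ℝ (EuclideanSpace ℝ (Fin N)))
    (x : EuclideanSpace ℝ (Fin N)) :
    (⇑x : Fin N → ℝ) ⬝ᵥ ⇑x = ∑ i, ((⇑(B i) : Fin N → ℝ) ⬝ᵥ ⇑x) ^ 2 := by
  have hinner : ∀ y z : EuclideanSpace ℝ (Fin N), (inner ℝ y z : ℝ) = (⇑y : Fin N → ℝ) ⬝ᵥ ⇑z := by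
    intro y z
    simp [PiLp.inner_apply, RCLike.inner_apply, dotProduct]
    exact Finset.sum_congr rfl fun _ _ => mul_comm _ _
  have h := B.sum_inner_mul_inner x x
  rw [hinner x x] at h
  rw [← h]
  refine Finset.sum_congr rfl fun i _ => ?_
  rw [← hinner (B i) x, real_inner_comm (B i) x]
  ring

lemma mean_preserved {N : ℕ} (Ψ : Matrix (Fin N) (Fin N) ℝ)
    (hcol : ∀ j, ∑ i, Ψ i j = 1) (w : Fin N → ℝ) :
    ∑ i, (Ψ *ᵥ w) i = ∑ i, w i := by
  simp only [Matrix.mulVec, dotProduct]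
  rw [Finset.sum_comm]
  refine Finset.sum_congr rfl fun k _ => ?_
  rw [← Finset.sum_mul, hcol k, one_mul]

lemma spec_step {N : ℕ} (Ψ : Matrix (Fin N) (Fin N) ℝ) (hsymm : Ψ.IsSymm)
    (hrow : ∀ i, ∑ j, Ψ i j = 1) (hcol : ∀ j, ∑ i, Ψ i j = 1)
    (heig : ∀ μ : ℝ, Module.End.HasEigenvalue (Matrix.toLin' Ψ) μ → μ ∈ Set.Icc (0:ℝ) 1)
    (lam2 : ℝ) (hlt : lam2 < 1) (h0 : 0 ≤ lam2)
    (hmax : ∀ (μ : ℝ) (v : Fin N → ℝ), v ≠ 0 → (∑ i, v i) = 0 → Ψ *ᵥ v = μ • v → μ ≤ lam2)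
    (w : Fin N → ℝ) (hw : ∑ i, w i = 0) :
    (Ψ *ᵥ w) ⬝ᵥ (Ψ *ᵥ w) ≤ lam2 ^ 2 * (w ⬝ᵥ w) := by
  have hH : Ψ.IsHermitian := by
    rwa [Matrix.IsHermitian, Matrix.conjTranspose_eq_transpose_of_trivial]
  set B := hH.eigenvectorBasis with hB
  set μ := hH.eigenvalues with hμ
  have heq : ∀ i, Ψ *ᵥ ⇑(B i) = μ i • ⇑(B i) := hH.mulVec_eigenvectorBasis
  have hBne : ∀ i, (⇑(B i) : Fin N → ℝ) ≠ 0 := by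
    intro i h
    exact B.orthonormal.ne_zero i (by ext j; exact congrFun h j)
  have hicc : ∀ i, μ i ∈ Set.Icc (0:ℝ) 1 := by
    intro i
    apply heig
    apply Module.End.hasEigenvalue_of_hasEigenvector (x := (⇑(B i) : Fin N → ℝ))
    refine ⟨Module.End.mem_eigenspace_iff.mpr ?_, hBne i⟩
    rw [Matrix.toLin'_apply]; exact heq i
  -- key per-index bound
  have key : ∀ i, (μ i) ^ 2 * ((⇑(B i) : Fin N → ℝ) ⬝ᵥ w) ^ 2
      ≤ lam2 ^ 2 * ((⇑(B i) : Fin N → ℝ) ⬝ᵥ w) ^ 2 := by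
    intro i
    by_cases hσ : ∑ j, (⇑(B i) : Fin N → ℝ) j = 0
    · have hle : μ i ≤ lam2 := hmax (μ i) _ (hBne i) hσ (heq i)
      have : (μ i)^2 ≤ lam2^2 := by
        have := (hicc i).1
        nlinarith
      exact mul_le_mul_of_nonneg_right this (sq_nonneg _)
    · -- eigenvector not mean-zero : must be constant, so orthogonal to w
      set u := (⇑(B i) : Fin N → ℝ) with hu
      set σ := ∑ j, u j with hσdef
      have hone : Ψ *ᵥ (fun _ => (1:ℝ)) = fun _ => (1:ℝ) := by
        ext j; simp [Matrix.mulVec, dotProduct, hrow]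
      have hμ1 : μ i = 1 := by
        have h1 : ∑ j, (Ψ *ᵥ u) j = σ := mean_preserved Ψ hcol u
        have h2 : ∑ j, (Ψ *ᵥ u) j = μ i * σ := by
          rw [heq i]
          simp only [Pi.smul_apply, smul_eq_mul]
          rw [← Finset.mul_sum]
        have := h1.symm.trans h2
        rcases mul_eq_mul_right_iff.mp (by linarith : μ i * σ = 1 * σ) with h | h
        · exact h
        · exact absurd h hσ
      have hNne : (N:ℝ) ≠ 0 := by
        rcases Nat.eq_zero_or_pos N with h | h
        · exfalso; apply hσ; subst h; rw [hσdef]; exact Finset.sum_of_isEmpty _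
        · exact Nat.cast_ne_zero.mpr h.ne'
      have hconst : u = (fun _ => σ / N : Fin N → ℝ) := by
        by_contra hne
        set p : Fin N → ℝ := fun j => u j - σ / N with hpdef
        have hpeq : p = u - (fun _ => σ / N : Fin N → ℝ) := rfl
        have hp0 : p ≠ 0 := by
          intro h
          apply hne
          funext j
          have := congrFun h j
          simp only [hpdef, Pi.zero_apply] at this
          linarith
        have hsum0 : ∑ j, p j = 0 := by
          simp only [hpdef]
          rw [Finset.sum_sub_distrib, Finset.sum_const, Finset.card_univ, Fintype.card_fin,
            nsmul_eq_mul]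
          rw [← hσdef]
          field_simp
          ring
        have hconst2 : Ψ *ᵥ (fun _ => σ / N : Fin N → ℝ) = (fun _ => σ / N : Fin N → ℝ) := by
          ext j
          simp only [Matrix.mulVec, dotProduct]
          rw [← Finset.sum_mul, hrow, one_mul]
        have heigp : Ψ *ᵥ p = (1:ℝ) • p := by
          rw [hpeq, Matrix.mulVec_sub, hconst2, heq i, hμ1, one_smul, one_smul]
        have := hmax 1 _ hp0 hsum0 heigp
        linarith
      have hdot : u ⬝ᵥ w = 0 := by
        rw [hconst]
        simp only [dotProduct]
        rw [← Finset.mul_sum, hw, mul_zero]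
      rw [hdot]
      simp
  -- Parseval
  set x : EuclideanSpace ℝ (Fin N) := (WithLp.equiv 2 (Fin N → ℝ)).symm w with hx
  set y : EuclideanSpace ℝ (Fin N) := (WithLp.equiv 2 (Fin N → ℝ)).symm (Ψ *ᵥ w) with hy
  have hxe : (⇑x : Fin N → ℝ) = w := rfl
  have hye : (⇑y : Fin N → ℝ) = Ψ *ᵥ w := rfl
  have hpx := euc_dot_self_eq_sum_sq B x
  have hpy := euc_dot_self_eq_sum_sq B y
  rw [hxe] at hpx
  rw [hye] at hpy
  rw [hpx, hpy, Finset.mul_sum]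
  apply Finset.sum_le_sum
  intro i _
  have hdm : (⇑(B i) : Fin N → ℝ) ⬝ᵥ (Ψ *ᵥ w) = μ i * ((⇑(B i) : Fin N → ℝ) ⬝ᵥ w) := by
    rw [Matrix.dotProduct_mulVec, ← Matrix.mulVec_transpose, hsymm.eq, heq i,
      smul_dotProduct]
    simp
  rw [hdm, mul_pow]
  exact key i

lemma spec_pow {N : ℕ} (Ψ : Matrix (Fin N) (Fin N) ℝ) (hsymm : Ψ.IsSymm)
    (hrow : ∀ i, ∑ j, Ψ i j = 1) (hcol : ∀ j, ∑ i, Ψ i j = 1)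
    (heig : ∀ μ : ℝ, Module.End.HasEigenvalue (Matrix.toLin' Ψ) μ → μ ∈ Set.Icc (0:ℝ) 1)
    (lam2 : ℝ) (hlt : lam2 < 1) (h0 : 0 ≤ lam2)
    (hmax : ∀ (μ : ℝ) (v : Fin N → ℝ), v ≠ 0 → (∑ i, v i) = 0 → Ψ *ᵥ v = μ • v → μ ≤ lam2)
    (k : ℕ) (w : Fin N → ℝ) (hw : ∑ i, w i = 0) :
    (Ψ ^ k *ᵥ w) ⬝ᵥ (Ψ ^ k *ᵥ w) ≤ lam2 ^ (2 * k) * (w ⬝ᵥ w) := by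
  induction k generalizing w with
  | zero => simp
  | succ k ih =>
    have hmean : ∑ i, (Ψ *ᵥ w) i = 0 := by rw [mean_preserved Ψ hcol w, hw]
    have hstep := spec_step Ψ hsymm hrow hcol heig lam2 hlt h0 hmax w hw
    have hpow : Ψ ^ (k + 1) *ᵥ w = Ψ ^ k *ᵥ (Ψ *ᵥ w) := by
      rw [Matrix.mulVec_mulVec, ← pow_succ]
    rw [hpow]
    calc (Ψ ^ k *ᵥ (Ψ *ᵥ w)) ⬝ᵥ (Ψ ^ k *ᵥ (Ψ *ᵥ w))
        ≤ lam2 ^ (2 * k) * ((Ψ *ᵥ w) ⬝ᵥ (Ψ *ᵥ w)) := ih (Ψ *ᵥ w) hmean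
      _ ≤ lam2 ^ (2 * k) * (lam2 ^ 2 * (w ⬝ᵥ w)) :=
          mul_le_mul_of_nonneg_left hstep (pow_nonneg h0 _)
      _ = lam2 ^ (2 * (k + 1)) * (w ⬝ᵥ w) := by ring

lemma proj_bound {N : ℕ} (hN : 1 ≤ N) (K : Matrix (Fin N) (Fin N) ℝ)
    (hK : K = Matrix.of fun _ _ => (N : ℝ)⁻¹) (v : Fin N → ℝ) :
    (∑ i, ((1 - K) *ᵥ v) i = 0) ∧
      ((1 - K) *ᵥ v) ⬝ᵥ ((1 - K) *ᵥ v) ≤ v ⬝ᵥ v := by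
  have hNne : (N:ℝ) ≠ 0 := Nat.cast_ne_zero.mpr (by omega)
  set m : ℝ := (∑ j, v j) / N with hm
  have happ : ∀ i, ((1 - K) *ᵥ v) i = v i - m := by
    intro i
    rw [Matrix.sub_mulVec, Matrix.one_mulVec]
    simp only [Pi.sub_apply, hK, Matrix.mulVec, dotProduct, Matrix.of_apply]
    rw [← Finset.mul_sum, hm]
    field_simp
  have hσ : ∑ j, v j = N * m := by rw [hm]; field_simp
  constructor
  · rw [Finset.sum_congr rfl fun i _ => happ i, Finset.sum_sub_distrib, Finset.sum_const,
      Finset.card_univ, Fintype.card_fin, nsmul_eq_mul, hσ]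
    ring
  · simp only [dotProduct]
    rw [Finset.sum_congr rfl fun i _ => (by rw [happ i] : ((1-K) *ᵥ v) i * ((1-K) *ᵥ v) i = (v i - m) * (v i - m))]
    have expand : ∑ i, (v i - m) * (v i - m)
        = (∑ i, v i * v i) - 2 * m * (∑ i, v i) + N * (m * m) := by
      rw [Finset.sum_congr rfl fun i _ => (by ring :
          (v i - m) * (v i - m) = v i * v i - 2 * m * v i + m * m)]
      rw [Finset.sum_add_distrib, Finset.sum_sub_distrib, ← Finset.mul_sum, Finset.sum_const,
        Finset.card_univ, Fintype.card_fin, nsmul_eq_mul]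
    rw [expand, hσ]
    nlinarith [sq_nonneg m, (Nat.cast_pos (α := ℝ)).mpr (by omega : 0 < N)]

lemma frob_row_bound {N d : ℕ} (hN : 1 ≤ N) (Ψ : Matrix (Fin N) (Fin N) ℝ) (hsymm : Ψ.IsSymm)
    (hrow : ∀ i, ∑ j, Ψ i j = 1) (hcol : ∀ j, ∑ i, Ψ i j = 1)
    (heig : ∀ μ : ℝ, Module.End.HasEigenvalue (Matrix.toLin' Ψ) μ → μ ∈ Set.Icc (0:ℝ) 1)
    (lam2 : ℝ) (hlt : lam2 < 1) (h0 : 0 ≤ lam2)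
    (hmax : ∀ (μ : ℝ) (v : Fin N → ℝ), v ≠ 0 → (∑ i, v i) = 0 → Ψ *ᵥ v = μ • v → μ ≤ lam2)
    (K : Matrix (Fin N) (Fin N) ℝ) (hK : K = Matrix.of fun _ _ => (N : ℝ)⁻¹)
    (k : ℕ) (A : Matrix (Fin d) (Fin N) ℝ) :
    frobSq (A * (1 - K) * Ψ ^ k) ≤ lam2 ^ (2 * k) * frobSq A := by
  have hKsymm : (1 - K)ᵀ = 1 - K := by
    rw [Matrix.transpose_sub, Matrix.transpose_one]
    congr 1
    ext i j
    simp [hK]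
  unfold frobSq
  rw [Finset.mul_sum]
  apply Finset.sum_le_sum
  intro r _
  have hΨsymm : (Ψ ^ k)ᵀ = Ψ ^ k := by rw [Matrix.transpose_pow, hsymm.eq]
  have hrowvec : ∀ c, (A * (1 - K) * Ψ ^ k : Matrix (Fin d) (Fin N) ℝ) r c
      = (Ψ ^ k *ᵥ ((1 - K) *ᵥ (A r))) c := by
    intro c
    have hB : Ψ ^ k * (1 - K) = ((1 - K) * Ψ ^ k)ᵀ := by
      rw [Matrix.transpose_mul, hKsymm, hΨsymm]
    rw [Matrix.mulVec_mulVec, hB, Matrix.mulVec_transpose]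
    simp only [Matrix.mul_apply, Matrix.vecMul, dotProduct, Finset.sum_mul, Finset.mul_sum]
    rw [Finset.sum_comm]
    exact Finset.sum_congr rfl fun x _ => Finset.sum_congr rfl fun y _ => by ring
  rw [Finset.sum_congr rfl fun c _ => (by rw [hrowvec c] :
      ((A * (1 - K) * Ψ ^ k : Matrix (Fin d) (Fin N) ℝ) r c) ^ 2
        = ((Ψ ^ k *ᵥ ((1 - K) *ᵥ (A r))) c) ^ 2)]
  have hproj := proj_bound hN K hK (A r)
  have hspec := spec_pow Ψ hsymm hrow hcol heig lam2 hlt h0 hmax k ((1 - K) *ᵥ (A r)) hproj.1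
  have hdot_eq : ∀ (x : Fin N → ℝ), ∑ c, (x c) ^ 2 = x ⬝ᵥ x := by
    intro x; simp [dotProduct, pow_two]
  rw [hdot_eq]
  calc (Ψ ^ k *ᵥ ((1 - K) *ᵥ (A r))) ⬝ᵥ (Ψ ^ k *ᵥ ((1 - K) *ᵥ (A r)))
      ≤ lam2 ^ (2 * k) * (((1 - K) *ᵥ (A r)) ⬝ᵥ ((1 - K) *ᵥ (A r))) := hspec
    _ ≤ lam2 ^ (2 * k) * ((A r) ⬝ᵥ (A r)) :=
        mul_le_mul_of_nonneg_left hproj.2 (pow_nonneg h0 _)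
    _ = lam2 ^ (2 * k) * ∑ c, (A r c) ^ 2 := by rw [hdot_eq]

lemma geom_bound {q : ℝ} (h0 : 0 ≤ q) (h1 : q < 1) (n : ℕ) :
    ∑ k ∈ Finset.range n, q ^ k ≤ 1 / (1 - q) := by
  have h1q : 0 < 1 - q := by linarith
  rw [geom_sum_eq (by linarith : q ≠ 1)]
  have : (q ^ n - 1) / (q - 1) = (1 - q ^ n) / (1 - q) := by
    rw [← neg_div_neg_eq]; ring_nf
  rw [this]
  have hn : 1 - q ^ n ≤ 1 := by nlinarith [pow_nonneg h0 n]
  gcongr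

lemma young_conv {q : ℝ} (h0 : 0 ≤ q) (h1 : q < 1) (T : ℕ) (a : ℕ → ℝ) (ha : ∀ s, 0 ≤ a s) :
    ∑ t ∈ Finset.range T, (∑ s ∈ Finset.range (t + 1), q ^ (t - s) * a s) ^ 2 ≤
      (1 / (1 - q)) ^ 2 * ∑ t ∈ Finset.range T, (a t) ^ 2 := by
  have h1q : 0 < 1 - q := by linarith
  have hgeom : ∀ n : ℕ, ∑ k ∈ Finset.range n, q ^ k ≤ 1 / (1 - q) := geom_bound h0 h1
  -- step 1: Cauchy-Schwarz per t
  have step1 : ∀ t, (∑ s ∈ Finset.range (t + 1), q ^ (t - s) * a s) ^ 2 ≤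
      (1 / (1 - q)) * ∑ s ∈ Finset.range (t + 1), q ^ (t - s) * (a s) ^ 2 := by
    intro t
    have hcs := Finset.sum_sq_le_sum_mul_sum_of_sq_eq_mul (Finset.range (t + 1))
      (r := fun s => q ^ (t - s) * a s) (f := fun s => q ^ (t - s))
      (g := fun s => q ^ (t - s) * (a s) ^ 2)
      (fun s _ => pow_nonneg h0 _)
      (fun s _ => mul_nonneg (pow_nonneg h0 _) (sq_nonneg _))
      (fun s _ => by ring)
    refine hcs.trans ?_
    apply mul_le_mul_of_nonneg_right ?_ (Finset.sum_nonneg fun s _ =>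
      mul_nonneg (pow_nonneg h0 _) (sq_nonneg _))
    have : ∑ s ∈ Finset.range (t + 1), q ^ (t - s) = ∑ k ∈ Finset.range (t + 1), q ^ k := by
      rw [← Finset.sum_range_reflect]
      refine Finset.sum_congr rfl fun j hj => ?_
      congr 1
      simp only [Finset.mem_range] at hj
      omega
    rw [this]
    exact hgeom (t + 1)
  calc ∑ t ∈ Finset.range T, (∑ s ∈ Finset.range (t + 1), q ^ (t - s) * a s) ^ 2
      ≤ ∑ t ∈ Finset.range T, (1 / (1 - q)) * ∑ s ∈ Finset.range (t + 1), q ^ (t - s) * (a s) ^ 2 :=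
        Finset.sum_le_sum fun t _ => step1 t
    _ = (1 / (1 - q)) * ∑ t ∈ Finset.range T, ∑ s ∈ Finset.range (t + 1), q ^ (t - s) * (a s) ^ 2 := by
        rw [Finset.mul_sum]
    _ = (1 / (1 - q)) * ∑ s ∈ Finset.range T, ∑ t ∈ Finset.Ico s T, q ^ (t - s) * (a s) ^ 2 := by
        congr 1
        refine Finset.sum_comm' ?_
        intro t s
        simp only [Finset.mem_range, Finset.mem_Ico]
        omega
    _ ≤ (1 / (1 - q)) * ∑ s ∈ Finset.range T, (1 / (1 - q)) * (a s) ^ 2 := by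
        apply mul_le_mul_of_nonneg_left ?_ (by positivity)
        apply Finset.sum_le_sum
        intro s _
        rw [← Finset.sum_mul]
        apply mul_le_mul_of_nonneg_right ?_ (sq_nonneg _)
        have : ∑ t ∈ Finset.Ico s T, q ^ (t - s) = ∑ k ∈ Finset.range (T - s), q ^ k := by
          rw [Finset.sum_Ico_eq_sum_range]
          refine Finset.sum_congr rfl fun j _ => ?_
          congr 1
          omega
        rw [this]
        exact hgeom _
    _ = (1 / (1 - q)) ^ 2 * ∑ t ∈ Finset.range T, (a t) ^ 2 := by
        rw [← Finset.mul_sum]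
        ring

noncomputable def matToEuc {d N : ℕ} : Matrix (Fin d) (Fin N) ℝ →ₗ[ℝ] EuclideanSpace ℝ (Fin d × Fin N) where
  toFun A := (WithLp.equiv 2 (Fin d × Fin N → ℝ)).symm (fun p => A p.1 p.2)
  map_add' A B := rfl
  map_smul' c A := rfl

lemma matToEuc_norm_sq {d N : ℕ} (A : Matrix (Fin d) (Fin N) ℝ) :
    ‖matToEuc A‖ ^ 2 = frobSq A := by
  rw [EuclideanSpace.norm_eq]
  rw [Real.sq_sqrt (by positivity)]
  unfold frobSq
  rw [Fintype.sum_prod_type]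
  refine Finset.sum_congr rfl fun r _ => Finset.sum_congr rfl fun c _ => ?_
  simp [matToEuc, Real.norm_eq_abs, sq_abs]

lemma matToEuc_norm_le {d N : ℕ} (A : Matrix (Fin d) (Fin N) ℝ) (c : ℝ) (hc : 0 ≤ c)
    (h : frobSq A ≤ c ^ 2) : ‖matToEuc A‖ ≤ c := by
  have h2 : ‖matToEuc A‖ ^ 2 ≤ c ^ 2 := by rw [matToEuc_norm_sq]; exact h
  nlinarith [norm_nonneg (matToEuc A)]

/-- **Lemma 4 (matrix sequence inequality).** For a symmetric doubly stochastic matrix `Ψ`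
with all eigenvalues in `[0,1]`, whose largest eigenvalue `λ₂` on the mean-zero subspace
satisfies `λ₂ < 1`, and any matrices `M_0, …, M_{T−1}`:
`Σ_t ‖Σ_{s≤t} M_s (I − (1/N)_N) Ψ^{t−s}‖_F² ≤ (1/(1−λ₂)²) Σ_t ‖M_t‖_F²`. -/
theorem matrix_sequence_bound_two (N d T : ℕ)
    (hN : 1 ≤ N) (hd : 1 ≤ d) (hT : 1 ≤ T)
    (Ψ : Matrix (Fin N) (Fin N) ℝ) (hsymm : Ψ.IsSymm)
    (hnonneg : ∀ i j, 0 ≤ Ψ i j)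
    (hrow : ∀ i, ∑ j, Ψ i j = 1) (hcol : ∀ j, ∑ i, Ψ i j = 1)
    (heig : ∀ μ : ℝ, Module.End.HasEigenvalue (Matrix.toLin' Ψ) μ → μ ∈ Set.Icc (0 : ℝ) 1)
    (lam2 : ℝ) (hlam2_lt : lam2 < 1)
    (hlam2_eig : ∃ v : Fin N → ℝ, v ≠ 0 ∧ (∑ i, v i) = 0 ∧ Ψ *ᵥ v = lam2 • v)
    (hlam2_max : ∀ (μ : ℝ) (v : Fin N → ℝ),
      v ≠ 0 → (∑ i, v i) = 0 → Ψ *ᵥ v = μ • v → μ ≤ lam2)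
    (K : Matrix (Fin N) (Fin N) ℝ) (hK : K = Matrix.of fun _ _ => (N : ℝ)⁻¹)
    (M : ℕ → Matrix (Fin d) (Fin N) ℝ) :
    ∑ t ∈ Finset.range T,
        frobSq (∑ s ∈ Finset.range (t + 1), M s * (1 - K) * Ψ ^ (t - s)) ≤
      (1 / (1 - lam2) ^ 2) * ∑ t ∈ Finset.range T, frobSq (M t) := by
  -- lam2 ≥ 0
  have h0 : 0 ≤ lam2 := by
    obtain ⟨v, hv0, hvs, hve⟩ := hlam2_eig
    refine (heig lam2 ?_).1
    apply Module.End.hasEigenvalue_of_hasEigenvector (x := v)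
    exact ⟨Module.End.mem_eigenspace_iff.mpr (by rw [Matrix.toLin'_apply]; exact hve), hv0⟩
  set a : ℕ → ℝ := fun s => ‖matToEuc (M s)‖ with hadef
  have ha : ∀ s, 0 ≤ a s := fun s => norm_nonneg _
  have hasq : ∀ s, (a s) ^ 2 = frobSq (M s) := fun s => matToEuc_norm_sq (M s)
  have hterm : ∀ t s, ‖matToEuc (M s * (1 - K) * Ψ ^ (t - s))‖ ≤ lam2 ^ (t - s) * a s := by
    intro t s
    apply matToEuc_norm_le _ _ (mul_nonneg (pow_nonneg h0 _) (ha s))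
    rw [mul_pow, ← pow_mul, hasq, Nat.mul_comm]
    exact frob_row_bound hN Ψ hsymm hrow hcol heig lam2 hlam2_lt h0 hlam2_max K hK (t - s) (M s)
  have hA : ∀ t, frobSq (∑ s ∈ Finset.range (t + 1), M s * (1 - K) * Ψ ^ (t - s))
      ≤ (∑ s ∈ Finset.range (t + 1), lam2 ^ (t - s) * a s) ^ 2 := by
    intro t
    rw [← matToEuc_norm_sq, map_sum]
    have h1 : ‖∑ s ∈ Finset.range (t + 1), matToEuc (M s * (1 - K) * Ψ ^ (t - s))‖
        ≤ ∑ s ∈ Finset.range (t + 1), lam2 ^ (t - s) * a s :=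
      (norm_sum_le _ _).trans (Finset.sum_le_sum fun s _ => hterm t s)
    have h2 : (0:ℝ) ≤ ‖∑ s ∈ Finset.range (t + 1), matToEuc (M s * (1 - K) * Ψ ^ (t - s))‖ :=
      norm_nonneg _
    nlinarith
  calc ∑ t ∈ Finset.range T,
        frobSq (∑ s ∈ Finset.range (t + 1), M s * (1 - K) * Ψ ^ (t - s))
      ≤ ∑ t ∈ Finset.range T, (∑ s ∈ Finset.range (t + 1), lam2 ^ (t - s) * a s) ^ 2 :=
        Finset.sum_le_sum fun t _ => hA t
    _ ≤ (1 / (1 - lam2)) ^ 2 * ∑ t ∈ Finset.range T, (a t) ^ 2 :=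
        young_conv h0 hlam2_lt T a ha
    _ = (1 / (1 - lam2) ^ 2) * ∑ t ∈ Finset.range T, frobSq (M t) := by
        rw [Finset.sum_congr rfl fun t _ => hasq t]
        rw [div_pow, one_pow]
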